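/- arXiv:2403.03085 — 4 statements merged into one kernel-verified Lean document; each statement's English description precedes it below -/
import Mathlib

section
/- In a generalised category with families (u, u̇, Σ ⊣ Δ), the left adjoint Σ is faithful; moreover for objects a, b of U̇, Σ induces a bijection between U̇(a,b) and the set of arrows f ∈ U(Σa, Σb) satisfying (Ση_b) ∘ f = (ΣΔf) ∘ (Ση_a). -/
open CategoryTheory

/-- An arrow `f : X ⟶ Y` in `E` is `p`-cartesian if every `g : Z ⟶ Y` whose image factors
through `p f` lifts uniquely. -/
def IsCartesian {E B : Type*} [Category E] [Category B] (p : E ⥤ B)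
    {X Y : E} (f : X ⟶ Y) : Prop :=
  ∀ ⦃Z : E⦄ (g : Z ⟶ Y) (h : p.obj Z ⟶ p.obj X),
    h ≫ p.map f = p.map g → ∃! l : Z ⟶ X, p.map l = h ∧ l ≫ f = g

/-- A functor `p : E ⥤ B` is a (Grothendieck) fibration if every arrow into the image of an
object of `E` has a cartesian lift. -/
def IsFibration {E B : Type*} [Category E] [Category B] (p : E ⥤ B) : Prop :=
  ∀ (Y : E) (X : B) (φ : X ⟶ p.obj Y),
    ∃ (Z : E) (f : Z ⟶ Y) (e : p.obj Z = X),
      IsCartesian p f ∧ p.map f = eqToHom e ≫ φ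

/-- A generalised category with families: fibrations `u : U ⥤ B` and `ut : Ut ⥤ B`, a cartesian
functor `S` ("Σ") over `B` with a right adjoint `D` ("Δ"), such that the unit of the adjunction
is componentwise `ut`-cartesian and the counit is componentwise `u`-cartesian. -/
structure GCwF (B U Ut : Type*) [Category B] [Category U] [Category Ut] where
  u : U ⥤ B
  ut : Ut ⥤ B
  u_fib : IsFibration u
  ut_fib : IsFibration ut
  S : Ut ⥤ U
  D : U ⥤ Ut
  S_over : S ⋙ u = ut
  S_cart : ∀ {a b : Ut} (f : a ⟶ b), IsCartesian ut f → IsCartesian u (S.map f)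
  adj : S ⊣ D
  unit_cart : ∀ a : Ut, IsCartesian ut (adj.unit.app a)
  counit_cart : ∀ A : U, IsCartesian u (adj.counit.app A)

/-- in a gcwf the functor `Σ` is faithful, and for objects `a b` of `U̇` it induces
a bijection between `U̇(a, b)` and the set of arrows `f : Σa ⟶ Σb` in `U` satisfying
`(Ση_b) ∘ f = (ΣΔf) ∘ (Ση_a)`. -/
theorem gcwf_sigma_faithful_and_bijection
    {B U Ut : Type*} [Category B] [Category U] [Category Ut] (G : GCwF B U Ut) :
    (∀ {a b : Ut} (g g' : a ⟶ b), G.S.map g = G.S.map g' → g = g') ∧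
    (∀ {a b : Ut} (g : a ⟶ b),
        G.S.map g ≫ G.S.map (G.adj.unit.app b) =
          G.S.map (G.adj.unit.app a) ≫ G.S.map (G.D.map (G.S.map g))) ∧
    (∀ (a b : Ut) (f : G.S.obj a ⟶ G.S.obj b),
        f ≫ G.S.map (G.adj.unit.app b) =
          G.S.map (G.adj.unit.app a) ≫ G.S.map (G.D.map f) →
        ∃! g : a ⟶ b, G.S.map g = f) := by
  -- translation between `ut` and `u ∘ S`
  have key : ∀ {a b : Ut} (φ : a ⟶ b),
      G.ut.map φ = eqToHom (Functor.congr_obj G.S_over.symm a) ≫ G.u.map (G.S.map φ)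
        ≫ eqToHom (Functor.congr_obj G.S_over b) := by
    intro a b φ
    simp [Functor.congr_hom G.S_over.symm φ]
  -- naturality of the unit, simplified
  have nat : ∀ {a b : Ut} (g : a ⟶ b),
      g ≫ G.adj.unit.app b = G.adj.unit.app a ≫ G.D.map (G.S.map g) := by
    intro a b g
    simpa using G.adj.unit.naturality g
  -- faithfulness
  have faithful : ∀ {a b : Ut} (g g' : a ⟶ b), G.S.map g = G.S.map g' → g = g' := by
    intro a b g g' hgg
    have hnat : g ≫ G.adj.unit.app b = g' ≫ G.adj.unit.app b := by
      rw [nat g, nat g', hgg]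
    have hut : G.ut.map g' = G.ut.map g := by rw [key g, key g', hgg]
    obtain ⟨l, -, hu⟩ := G.unit_cart b (g ≫ G.adj.unit.app b) (G.ut.map g)
      (G.ut.map_comp g (G.adj.unit.app b)).symm
    have h1 : g = l := hu g ⟨rfl, rfl⟩
    have h2 : g' = l := hu g' ⟨hut, hnat.symm⟩
    rw [h1, h2]
  refine ⟨faithful, ?_, ?_⟩
  · intro a b g
    rw [← G.S.map_comp, ← G.S.map_comp, nat g]
  · intro a b f hf
    -- the base arrow corresponding to `f`
    set ea : G.ut.obj a = G.u.obj (G.S.obj a) := Functor.congr_obj G.S_over.symm a with hea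
    set eb : G.u.obj (G.S.obj b) = G.ut.obj b := Functor.congr_obj G.S_over b with heb
    have hfu : G.u.map f ≫ G.u.map (G.S.map (G.adj.unit.app b)) =
        G.u.map (G.S.map (G.adj.unit.app a)) ≫ G.u.map (G.S.map (G.D.map f)) := by
      rw [← G.u.map_comp, ← G.u.map_comp, hf]
    have hbase : (eqToHom ea ≫ G.u.map f ≫ eqToHom eb) ≫ G.ut.map (G.adj.unit.app b) =
        G.ut.map (G.adj.unit.app a ≫ G.D.map f) := by
      rw [G.ut.map_comp, key (G.adj.unit.app b), key (G.adj.unit.app a), key (G.D.map f)]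
      simp [reassoc_of% hfu]
    obtain ⟨g, ⟨hg1, hg2⟩, -⟩ := G.unit_cart b (G.adj.unit.app a ≫ G.D.map f)
      (eqToHom ea ≫ G.u.map f ≫ eqToHom eb) hbase
    -- `S g` and `f` have the same image in `B`
    have himg : G.u.map (G.S.map g) = G.u.map f := by
      have h := (key g).symm.trans hg1
      have h' := congrArg (fun x => eqToHom ea.symm ≫ x ≫ eqToHom eb.symm) h
      simpa using h'
    -- both are lifts along the cartesian arrow `S η_b`
    have hcart : IsCartesian G.u (G.S.map (G.adj.unit.app b)) :=
      G.S_cart _ (G.unit_cart b)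
    obtain ⟨l, -, hu⟩ := hcart (f ≫ G.S.map (G.adj.unit.app b)) (G.u.map f)
      (G.u.map_comp f (G.S.map (G.adj.unit.app b))).symm
    have h1 : f = l := hu f ⟨rfl, rfl⟩
    have h2 : G.S.map g = l := by
      refine hu (G.S.map g) ⟨himg, ?_⟩
      rw [← G.S.map_comp, hg2, G.S.map_comp, hf]
    exact ⟨g, h2.trans h1.symm, fun g' hg' => faithful g' g (hg'.trans (h2.trans h1.symm).symm)⟩
end

section
/- Let (u, u̇, Σ ⊣ Δ) be a generalised category with families. Then for every u-cartesian arrow f : A → B in U, the square in B with top u(ε_A) : u̇(ΔA) → uA, left u̇(Δf), right uf, and bottom u(ε_B) is a pullback square. -/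
open CategoryTheory

section Aux

variable {B U Ut : Type*} [Category B] [Category U] [Category Ut] (G : GCwF B U Ut)

lemma gcwf_obj_eq (a : Ut) : G.u.obj (G.S.obj a) = G.ut.obj a :=
  Functor.congr_obj G.S_over a

lemma gcwf_map_eq {a b : Ut} (m : a ⟶ b) :
    G.u.map (G.S.map m) =
      eqToHom (gcwf_obj_eq G a) ≫ G.ut.map m ≫ eqToHom (gcwf_obj_eq G b).symm :=
  Functor.congr_hom G.S_over m

lemma gcwf_map_eq' {a b : Ut} (m : a ⟶ b) :
    G.ut.map m =
      eqToHom (gcwf_obj_eq G a).symm ≫ G.u.map (G.S.map m) ≫ eqToHom (gcwf_obj_eq G b) := by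
  rw [gcwf_map_eq]; simp

lemma gcwf_key {A A' : U} (f : A ⟶ A') (hf : IsCartesian G.u f)
    {T : B} (c₁ : T ⟶ G.u.obj A) (c₂ : T ⟶ G.u.obj (G.S.obj (G.D.obj A')))
    (hc : c₁ ≫ G.u.map f = c₂ ≫ G.u.map (G.adj.counit.app A')) :
    ∃! l : T ⟶ G.u.obj (G.S.obj (G.D.obj A)),
      l ≫ G.u.map (G.adj.counit.app A) = c₁ ∧
      l ≫ G.u.map (G.S.map (G.D.map f)) = c₂ := by
  obtain ⟨Z, g, e, gcart, hg⟩ :=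
    G.ut_fib (G.D.obj A') T (c₂ ≫ eqToHom (gcwf_obj_eq G (G.D.obj A')))
  have e' : G.u.obj (G.S.obj Z) = T := (gcwf_obj_eq G Z).trans e
  have hgu : G.u.map (G.S.map g) = eqToHom e' ≫ c₂ := by
    rw [gcwf_map_eq, hg]; simp
  subst e'
  simp only [eqToHom_refl, Category.id_comp] at hgu
  -- cartesian lift of the bottom-right corner along f
  have hcond : c₁ ≫ G.u.map f = G.u.map (G.S.map g ≫ G.adj.counit.app A') := by
    rw [G.u.map_comp, hgu]; exact hc
  obtain ⟨k, ⟨hk1, hk2⟩, hkuniq⟩ := hf (G.S.map g ≫ G.adj.counit.app A') c₁ hcond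
  set kt : Z ⟶ G.D.obj A := (G.adj.homEquiv Z A) k with hkt
  have fact1 : G.S.map kt ≫ G.adj.counit.app A = k := by
    have := G.adj.homEquiv_counit (X := Z) (Y := A) (g := kt)
    rw [← this, hkt, Equiv.symm_apply_apply]
  have fact2 : kt ≫ G.D.map f = g := by
    rw [hkt, ← Adjunction.homEquiv_naturality_right, hk2,
      ← G.adj.homEquiv_counit, Equiv.apply_symm_apply]
  refine ⟨G.u.map (G.S.map kt), ⟨?_, ?_⟩, ?_⟩
  · rw [← G.u.map_comp, fact1, hk1]
  · rw [← G.u.map_comp, ← G.S.map_comp, fact2, hgu]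
  · rintro l ⟨hl1, hl2⟩
    -- lift l to a cartesian arrow m over it
    obtain ⟨W, m, e2, mcart, hm⟩ :=
      G.ut_fib (G.D.obj A) (G.u.obj (G.S.obj Z)) (l ≫ eqToHom (gcwf_obj_eq G (G.D.obj A)))
    have e2' : G.u.obj (G.S.obj W) = G.u.obj (G.S.obj Z) := (gcwf_obj_eq G W).trans e2
    have hmu : G.u.map (G.S.map m) = eqToHom e2' ≫ l := by
      rw [gcwf_map_eq, hm]; simp
    -- factor m ≫ D f through the cartesian g
    have hcond2 : eqToHom (e2.trans (gcwf_obj_eq G Z)) ≫ G.ut.map g =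
        G.ut.map (m ≫ G.D.map f) := by
      rw [gcwf_map_eq', gcwf_map_eq' G (m ≫ G.D.map f), G.S.map_comp, G.u.map_comp, hgu,
        reassoc_of% hmu, hl2]
      simp
    obtain ⟨n, ⟨hn1, hn2⟩, _⟩ := gcart (m ≫ G.D.map f) (eqToHom (e2.trans (gcwf_obj_eq G Z))) hcond2
    have hnu : G.u.map (G.S.map n) = eqToHom e2' := by
      rw [gcwf_map_eq, hn1]; simp
    -- uniqueness via cartesianness of f
    have hAcond : (eqToHom e2' ≫ c₁) ≫ G.u.map f =
        G.u.map ((G.S.map m ≫ G.adj.counit.app A) ≫ f) := by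
      rw [G.u.map_comp, G.u.map_comp, hmu, ← hl1]
      simp
    obtain ⟨w, _, hwuniq⟩ :=
      hf ((G.S.map m ≫ G.adj.counit.app A) ≫ f) (eqToHom e2' ≫ c₁) hAcond
    have h1 : G.S.map m ≫ G.adj.counit.app A = w := by
      apply hwuniq
      refine ⟨?_, rfl⟩
      rw [G.u.map_comp, hmu, Category.assoc, hl1]
    have h2 : G.S.map n ≫ k = w := by
      apply hwuniq
      constructor
      · rw [G.u.map_comp, hnu, hk1]
      · rw [Category.assoc, hk2, ← Category.assoc, ← G.S.map_comp, hn2, G.S.map_comp,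
          Category.assoc, Adjunction.counit_naturality, ← Category.assoc]
    have hmn : m = n ≫ kt := by
      apply (G.adj.homEquiv W A).symm.injective
      rw [G.adj.homEquiv_counit, G.adj.homEquiv_counit, G.S.map_comp, Category.assoc,
        fact1, h1, h2]
    have : eqToHom e2' ≫ l = eqToHom e2' ≫ G.u.map (G.S.map kt) := by
      rw [← hmu, hmn, G.S.map_comp, G.u.map_comp, hnu]
    exact (cancel_epi (eqToHom e2')).mp this

end Aux

/-- in a gcwf, for every `u`-cartesian arrow `f : A ⟶ A'` in `U`, the square in
`B` with top `u(ε_A)`, left `u̇(Δf) = u(ΣΔf)`, right `uf`, and bottom `u(ε_{A'})` is a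
pullback. -/
theorem gcwf_counit_square_pullback
    {B U Ut : Type*} [Category B] [Category U] [Category Ut] (G : GCwF B U Ut)
    {A A' : U} (f : A ⟶ A') (hf : IsCartesian G.u f) :
    IsPullback (G.u.map (G.adj.counit.app A)) (G.u.map (G.S.map (G.D.map f)))
      (G.u.map f) (G.u.map (G.adj.counit.app A')) := by
  have comm : G.u.map (G.adj.counit.app A) ≫ G.u.map f =
      G.u.map (G.S.map (G.D.map f)) ≫ G.u.map (G.adj.counit.app A') := by
    rw [← G.u.map_comp, ← G.u.map_comp, G.adj.counit_naturality f]
  have key := fun (s : Limits.PullbackCone (G.u.map f)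
      (G.u.map (G.adj.counit.app A'))) =>
    gcwf_key G f hf s.fst s.snd s.condition
  exact IsPullback.of_isLimit' ⟨comm⟩
    (Limits.PullbackCone.IsLimit.mk comm (fun s => (key s).exists.choose)
      (fun s => (key s).exists.choose_spec.1)
      (fun s => (key s).exists.choose_spec.2)
      (fun s w h1 h2 => (key s).unique ⟨h1, h2⟩ (key s).exists.choose_spec))
end

section
/- Let (u, u̇, Σ ⊣ Δ) be a generalised category with families. The comonad ΣΔ on U, with counit ε and comultiplication ΣηΔ, is a weakening and contraction comonad on the fibration u. -/
open CategoryTheory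

/-- in a gcwf, the comonad `ΣΔ` on `U` induced by the adjunction `Σ ⊣ Δ` (with
counit `ε` and comultiplication `ΣηΔ`) is a weakening and contraction comonad on the fibration
`u`: its counit components are `u`-cartesian and `u` maps the naturality squares of the counit
at cartesian arrows to pullbacks. -/
theorem gcwf_comonad_is_wccmd
    {B U Ut : Type*} [Category B] [Category U] [Category Ut] (G : GCwF B U Ut) :
    (∀ A : U, IsCartesian G.u (G.adj.toComonad.ε.app A)) ∧
    (∀ {A A' : U} (f : A ⟶ A'), IsCartesian G.u f →
      IsPullback (G.u.map (G.adj.toComonad.ε.app A))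
        (G.u.map ((G.adj.toComonad : U ⥤ U).map f)) (G.u.map f)
        (G.u.map (G.adj.toComonad.ε.app A'))) := by
  have objEq : ∀ X : Ut, G.u.obj (G.S.obj X) = G.ut.obj X := fun X =>
    Functor.congr_obj G.S_over X
  have mapEq : ∀ {X Y : Ut} (m : X ⟶ Y),
      G.u.map (G.S.map m) = eqToHom (objEq X) ≫ G.ut.map m ≫ eqToHom (objEq Y).symm :=
    fun m => Functor.congr_hom G.S_over m
  have mapEq' : ∀ {X Y : Ut} (m : X ⟶ Y),
      G.ut.map m = eqToHom (objEq X).symm ≫ G.u.map (G.S.map m) ≫ eqToHom (objEq Y) := by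
    intro X Y m; rw [mapEq m]; simp
  constructor
  · intro A; exact G.counit_cart A
  · intro A A' f hf
    show IsPullback (G.u.map (G.adj.counit.app A)) (G.u.map (G.S.map (G.D.map f)))
      (G.u.map f) (G.u.map (G.adj.counit.app A'))
    have nat : ∀ {X Y : U} (m : X ⟶ Y),
        G.S.map (G.D.map m) ≫ G.adj.counit.app Y = G.adj.counit.app X ≫ m := by
      intro X Y m; simpa using G.adj.counit.naturality m
    have unat : ∀ {X Y : Ut} (m : X ⟶ Y),
        G.adj.unit.app X ≫ G.D.map (G.S.map m) = m ≫ G.adj.unit.app Y := by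
      intro X Y m; simpa using (G.adj.unit.naturality m).symm
    have comm : G.u.map (G.adj.counit.app A) ≫ G.u.map f =
        G.u.map (G.S.map (G.D.map f)) ≫ G.u.map (G.adj.counit.app A') := by
      rw [← Functor.map_comp, ← Functor.map_comp, nat f]
    have key : ∀ (T : B) (a : T ⟶ G.u.obj A)
        (b : T ⟶ G.u.obj (G.S.obj (G.D.obj A'))),
        a ≫ G.u.map f = b ≫ G.u.map (G.adj.counit.app A') →
        ∃! l : T ⟶ G.u.obj (G.S.obj (G.D.obj A)),
          l ≫ G.u.map (G.adj.counit.app A) = a ∧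
          l ≫ G.u.map (G.S.map (G.D.map f)) = b := by
      intro T a b hab
      -- lift b to a cartesian arrow ψ over it
      obtain ⟨W, ψ, eW, ψcart, hψ⟩ :=
        G.ut_fib (G.D.obj A') T (b ≫ eqToHom (objEq (G.D.obj A')))
      have eSW : G.u.obj (G.S.obj W) = T := (objEq W).trans eW
      have hSψ : G.u.map (G.S.map ψ) = eqToHom eSW ≫ b := by
        rw [mapEq ψ, hψ]; simp
      -- get g : S W ⟶ A from cartesianness of f
      have hg0 : (eqToHom eSW ≫ a) ≫ G.u.map f =
          G.u.map (G.S.map ψ ≫ G.adj.counit.app A') := by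
        rw [Functor.map_comp, hSψ, Category.assoc, Category.assoc, hab]
      obtain ⟨g, ⟨hg1, hg2⟩, -⟩ :=
        hf (G.S.map ψ ≫ G.adj.counit.app A') (eqToHom eSW ≫ a) hg0
      -- the transpose of g
      set gh : W ⟶ G.D.obj A := G.adj.unit.app W ≫ G.D.map g with hgh
      have hSgh_ε : G.S.map gh ≫ G.adj.counit.app A = g := by
        rw [hgh, Functor.map_comp, Category.assoc, nat g, ← Category.assoc,
          G.adj.left_triangle_components, Category.id_comp]
      have hgh_f : gh ≫ G.D.map f = ψ := by
        rw [hgh, Category.assoc, ← Functor.map_comp, hg2, Functor.map_comp,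
          ← Category.assoc, unat ψ, Category.assoc, G.adj.right_triangle_components,
          Category.comp_id]
      refine ⟨eqToHom eSW.symm ≫ G.u.map (G.S.map gh), ⟨?_, ?_⟩, ?_⟩
      · rw [Category.assoc, ← Functor.map_comp, hSgh_ε, hg1]; simp
      · rw [Category.assoc, ← Functor.map_comp, ← Functor.map_comp, hgh_f, hSψ]; simp
      · rintro l ⟨hl1, hl2⟩
        -- lift l to a cartesian arrow χ over it
        obtain ⟨V, χ, eV, χcart, hχ⟩ :=
          G.ut_fib (G.D.obj A) T (l ≫ eqToHom (objEq (G.D.obj A)))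
        have eSV : G.u.obj (G.S.obj V) = T := (objEq V).trans eV
        have hSχ : G.u.map (G.S.map χ) = eqToHom eSV ≫ l := by
          rw [mapEq χ, hχ]; simp
        -- factor χ ≫ D f through ψ
        have hbase : eqToHom (eV.trans eW.symm) ≫ G.ut.map ψ = G.ut.map (χ ≫ G.D.map f) := by
          rw [Functor.map_comp, hχ, hψ, mapEq' (G.D.map f)]
          have : l ≫ eqToHom (objEq (G.D.obj A)) ≫ eqToHom (objEq (G.D.obj A)).symm ≫
              G.u.map (G.S.map (G.D.map f)) ≫ eqToHom (objEq (G.D.obj A')) =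
              b ≫ eqToHom (objEq (G.D.obj A')) := by
            rw [eqToHom_trans_assoc]; simp [← Category.assoc, hl2]
          simp only [Category.assoc]
          rw [this]
          simp
        obtain ⟨w, ⟨hw1, hw2⟩, -⟩ := ψcart (χ ≫ G.D.map f) (eqToHom (eV.trans eW.symm)) hbase
        -- show S χ ≫ ε = S w ≫ g using cartesianness of f
        have huc1 : G.u.map (G.S.map χ ≫ G.adj.counit.app A) = eqToHom eSV ≫ a := by
          rw [Functor.map_comp, hSχ, Category.assoc, hl1]
        have huc2 : G.u.map (G.S.map w ≫ g) = eqToHom eSV ≫ a := by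
          rw [Functor.map_comp, mapEq w, hw1, hg1]; simp
        have hcf : (G.S.map χ ≫ G.adj.counit.app A) ≫ f = (G.S.map w ≫ g) ≫ f := by
          calc (G.S.map χ ≫ G.adj.counit.app A) ≫ f
              = G.S.map (χ ≫ G.D.map f) ≫ G.adj.counit.app A' := by
                rw [Functor.map_comp, Category.assoc, Category.assoc, nat f]
            _ = G.S.map (w ≫ ψ) ≫ G.adj.counit.app A' := by rw [hw2]
            _ = (G.S.map w ≫ g) ≫ f := by
                rw [Functor.map_comp, Category.assoc, Category.assoc, hg2]
        have hc : G.S.map χ ≫ G.adj.counit.app A = G.S.map w ≫ g := by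
          obtain ⟨z, hz, hzu⟩ := hf ((G.S.map χ ≫ G.adj.counit.app A) ≫ f)
            (eqToHom eSV ≫ a) (by rw [Functor.map_comp, huc1])
          have e1 := hzu _ ⟨huc1, rfl⟩
          have e2 := hzu _ ⟨huc2, hcf.symm⟩
          rw [e1, e2]
        -- transpose: χ = w ≫ gh
        have hχw : χ = w ≫ gh := by
          have h1 : χ = G.adj.unit.app V ≫ G.D.map (G.S.map χ ≫ G.adj.counit.app A) := by
            rw [Functor.map_comp, ← Category.assoc, unat χ, Category.assoc,
              G.adj.right_triangle_components, Category.comp_id]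
          rw [h1, hc, Functor.map_comp, ← Category.assoc, unat w, hgh, Category.assoc]
        -- conclude
        have hl : l = eqToHom eV.symm ≫ G.ut.map χ ≫ eqToHom (objEq (G.D.obj A)).symm := by
          rw [hχ]; simp
        rw [hl, hχw, Functor.map_comp, hw1, mapEq' gh]
        simp [eqToHom_trans_assoc]
    refine IsPullback.of_isLimit (Limits.PullbackCone.IsLimit.mk comm
      (fun s => (key s.pt s.fst s.snd s.condition).choose)
      (fun s => (key s.pt s.fst s.snd s.condition).choose_spec.1.1)
      (fun s => (key s.pt s.fst s.snd s.condition).choose_spec.1.2)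
      (fun s m h1 h2 => (key s.pt s.fst s.snd s.condition).choose_spec.2 m ⟨h1, h2⟩))
end

section
/- Let (u, u̇, Σ ⊣ Δ) be a generalised category with families with u̇ cloven. Then the canonical comparison functor M : U̇ → Coalg(ΣΔ), sending a to the coalgebra Ση_a : Σa → ΣΔΣa, is an equivalence of categories; moreover one can choose a quasi-inverse N and natural isomorphisms ζ : NM ≅ Id and ξ : MN ≅ Id forming an adjoint equivalence, with all components of ζ and ξ vertical (lying over identities in B). -/
open CategoryTheory

section Lemmas
variable {E B : Type*} [Category E] [Category B] (p : E ⥤ B)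

theorem cart_unique {X Y Z : E} {f : X ⟶ Y} (hf : IsCartesian p f)
    {g₁ g₂ : Z ⟶ X} (hb : p.map g₁ = p.map g₂) (hc : g₁ ≫ f = g₂ ≫ f) : g₁ = g₂ := by
  obtain ⟨l, -, hu⟩ := hf (g₂ ≫ f) (p.map g₂) (by rw [p.map_comp])
  rw [hu g₁ ⟨hb, hc⟩, hu g₂ ⟨rfl, rfl⟩]

theorem cart_comp {X Y Z : E} {f : X ⟶ Y} {g : Y ⟶ Z}
    (hf : IsCartesian p f) (hg : IsCartesian p g) : IsCartesian p (f ≫ g) := by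
  intro W t b w
  obtain ⟨l₁, ⟨hl₁b, hl₁c⟩, hu₁⟩ := hg t (b ≫ p.map f)
    (by rw [Category.assoc, ← p.map_comp]; exact w)
  obtain ⟨l₂, ⟨hl₂b, hl₂c⟩, hu₂⟩ := hf l₁ b (by rw [hl₁b])
  refine ⟨l₂, ⟨hl₂b, by rw [← Category.assoc, hl₂c, hl₁c]⟩, ?_⟩
  rintro l' ⟨hb', hc'⟩
  exact hu₂ l' ⟨hb', hu₁ (l' ≫ f) ⟨by rw [p.map_comp, hb'], by rw [Category.assoc]; exact hc'⟩⟩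

theorem cart_cancel {X Y Z : E} {f : X ⟶ Y} {g : Y ⟶ Z}
    (hg : IsCartesian p g) (hfg : IsCartesian p (f ≫ g)) : IsCartesian p f := by
  intro W t b w
  obtain ⟨l, ⟨hlb, hlc⟩, hu⟩ := hfg (t ≫ g) b
    (by simp only [p.map_comp, ← Category.assoc, w])
  have hlf : l ≫ f = t := by
    refine cart_unique p hg ?_ (by rw [Category.assoc]; exact hlc)
    rw [p.map_comp, hlb, w]
  refine ⟨l, ⟨hlb, hlf⟩, ?_⟩
  rintro l' ⟨hb', hc'⟩
  exact hu l' ⟨hb', by rw [← Category.assoc, hc']⟩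

theorem cart_iso {X Y : E} {f : X ⟶ Y} (hf : IsCartesian p f)
    (hi : IsIso (p.map f)) : IsIso f := by
  obtain ⟨l, ⟨hlb, hlc⟩, -⟩ := hf (𝟙 Y) (inv (p.map f)) (by simp)
  refine ⟨l, ?_, hlc⟩
  refine cart_unique p hf ?_ (by rw [Category.assoc, hlc]; simp)
  rw [p.map_comp, hlb]; simp

/-- extract the unique lift through a cartesian arrow -/
noncomputable def cartLift {X Y Z : E} {f : X ⟶ Y} (hf : IsCartesian p f)
    (g : Z ⟶ Y) (b : p.obj Z ⟶ p.obj X) (w : b ≫ p.map f = p.map g) : Z ⟶ X :=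
  (hf g b w).choose

theorem cartLift_over {X Y Z : E} {f : X ⟶ Y} (hf : IsCartesian p f)
    (g : Z ⟶ Y) (b : p.obj Z ⟶ p.obj X) (w : b ≫ p.map f = p.map g) :
    p.map (cartLift p hf g b w) = b := (hf g b w).choose_spec.1.1

theorem cartLift_fac {X Y Z : E} {f : X ⟶ Y} (hf : IsCartesian p f)
    (g : Z ⟶ Y) (b : p.obj Z ⟶ p.obj X) (w : b ≫ p.map f = p.map g) :
    cartLift p hf g b w ≫ f = g := (hf g b w).choose_spec.1.2

end Lemmas

namespace GCwFAux

variable {B U Ut : Type*} [Category B] [Category U] [Category Ut] (G : GCwF B U Ut)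

def oeq (a : Ut) : G.u.obj (G.S.obj a) = G.ut.obj a := Functor.congr_obj G.S_over a

theorem meq {a b : Ut} (f : a ⟶ b) :
    G.u.map (G.S.map f) = eqToHom (oeq G a) ≫ G.ut.map f ≫ eqToHom (oeq G b).symm := by
  have := Functor.congr_hom G.S_over f
  simpa using this

/-- The base map of a coalgebra structure, transported to `ut`. -/
def φ (h : G.adj.toComonad.Coalgebra) : G.u.obj h.A ⟶ G.ut.obj (G.D.obj h.A) :=
  G.u.map h.a ≫ eqToHom (oeq G (G.D.obj h.A))

noncomputable def Nobj (h : G.adj.toComonad.Coalgebra) : Ut :=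
  (G.ut_fib (G.D.obj h.A) (G.u.obj h.A) (φ G h)).choose

noncomputable def kh (h : G.adj.toComonad.Coalgebra) : Nobj G h ⟶ G.D.obj h.A :=
  (G.ut_fib (G.D.obj h.A) (G.u.obj h.A) (φ G h)).choose_spec.choose

def e (h : G.adj.toComonad.Coalgebra) : G.ut.obj (Nobj G h) = G.u.obj h.A :=
  (G.ut_fib (G.D.obj h.A) (G.u.obj h.A) (φ G h)).choose_spec.choose_spec.choose

theorem kh_cart (h : G.adj.toComonad.Coalgebra) : IsCartesian G.ut (kh G h) :=
  (G.ut_fib (G.D.obj h.A) (G.u.obj h.A) (φ G h)).choose_spec.choose_spec.choose_spec.1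

theorem kh_over (h : G.adj.toComonad.Coalgebra) :
    G.ut.map (kh G h) = eqToHom (e G h) ≫ φ G h :=
  (G.ut_fib (G.D.obj h.A) (G.u.obj h.A) (φ G h)).choose_spec.choose_spec.choose_spec.2

/-- The component of `ξ`: `Σ(k_h) ≫ ε`. -/
noncomputable def θ (h : G.adj.toComonad.Coalgebra) : G.S.obj (Nobj G h) ⟶ h.A :=
  G.S.map (kh G h) ≫ G.adj.counit.app h.A

theorem Skh_over (h : G.adj.toComonad.Coalgebra) :
    G.u.map (G.S.map (kh G h)) =
      eqToHom (oeq G (Nobj G h)) ≫ eqToHom (e G h) ≫ G.u.map h.a := by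
  rw [meq, kh_over]
  simp [φ]
  erw [eqToHom_trans, eqToHom_refl, Category.comp_id]
  rfl

theorem θ_over (h : G.adj.toComonad.Coalgebra) :
    G.u.map (θ G h) = eqToHom ((oeq G (Nobj G h)).trans (e G h)) := by
  have hc : G.u.map h.a ≫ G.u.map (G.adj.counit.app h.A) = 𝟙 _ := by
    erw [← G.u.map_comp]
    have := h.counit
    simp only [Adjunction.toComonad_ε] at this
    rw [this, G.u.map_id]
  rw [θ, G.u.map_comp, Skh_over]
  erw [Category.assoc, Category.assoc, hc]
  simp

theorem θ_cart (h : G.adj.toComonad.Coalgebra) : IsCartesian G.u (θ G h) :=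
  cart_comp G.u (G.S_cart _ (kh_cart G h)) (G.counit_cart h.A)

instance θ_iso (h : G.adj.toComonad.Coalgebra) : IsIso (θ G h) :=
  cart_iso G.u (θ_cart G h) (by rw [θ_over]; infer_instance)

/-- `h.a` is cartesian (a section of the cartesian counit). -/
theorem ha_cart (h : G.adj.toComonad.Coalgebra) : IsCartesian G.u h.a := by
  have : h.a ≫ G.adj.counit.app h.A = 𝟙 h.A := by
    have := h.counit; simpa [Adjunction.toComonad_ε] using this
  refine cart_cancel G.u (G.counit_cart h.A) ?_
  rw [this]
  intro Z g b w
  refine ⟨g, ⟨by simpa using w.symm, by simp⟩, ?_⟩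
  rintro l ⟨hb, hc⟩; simpa using hc

/-- counit law of a coalgebra, in terms of the adjunction counit. -/
theorem coalg_counit (h : G.adj.toComonad.Coalgebra) :
    h.a ≫ G.adj.counit.app h.A = 𝟙 h.A := by
  have := h.counit; simpa [Adjunction.toComonad_ε] using this

theorem u_coalg_counit (h : G.adj.toComonad.Coalgebra) :
    G.u.map h.a ≫ G.u.map (G.adj.counit.app h.A) = 𝟙 _ := by
  erw [← G.u.map_comp, coalg_counit, G.u.map_id]

/-- The coalgebra-morphism property of `θ`. -/
theorem θ_coalg (h : G.adj.toComonad.Coalgebra) :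
    G.S.map (G.adj.unit.app (Nobj G h)) ≫ G.S.map (G.D.map (θ G h)) = θ G h ≫ h.a := by
  have lhs : G.S.map (G.adj.unit.app (Nobj G h)) ≫ G.S.map (G.D.map (θ G h)) =
      G.S.map (kh G h) := by
    rw [← G.S.map_comp]
    congr 1
    rw [θ, G.D.map_comp, ← Category.assoc]
    have nat : G.adj.unit.app (Nobj G h) ≫ G.D.map (G.S.map (kh G h)) =
        kh G h ≫ G.adj.unit.app (G.D.obj h.A) := by
      simpa using (G.adj.unit.naturality (kh G h)).symm
    rw [nat, Category.assoc, G.adj.right_triangle_components, Category.comp_id]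
  rw [lhs, θ, Category.assoc]
  refine cart_unique G.u (G.counit_cart h.A) ?_ ?_
  · erw [G.u.map_comp, G.u.map_comp, Skh_over, Category.assoc, Category.assoc,
      ← Category.assoc (G.u.map h.a), u_coalg_counit, Category.id_comp]
    rfl
  · erw [Category.assoc, Category.assoc, coalg_counit, Category.comp_id]

theorem meq' {a b : Ut} (f : a ⟶ b) :
    G.ut.map f = eqToHom (oeq G a).symm ≫ G.u.map (G.S.map f) ≫ eqToHom (oeq G b) := by
  rw [meq]; simp

/-- coalgebra-morphism condition via the adjunction functors. -/
theorem hom_h {h h' : G.adj.toComonad.Coalgebra} (f : h ⟶ h') :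
    h.a ≫ G.S.map (G.D.map f.f) = f.f ≫ h'.a := by
  have := f.h; exact this

/-- The base map of `N f`. -/
noncomputable def base {h h' : G.adj.toComonad.Coalgebra} (f : h ⟶ h') :
    G.ut.obj (Nobj G h) ⟶ G.ut.obj (Nobj G h') :=
  eqToHom (e G h) ≫ G.u.map f.f ≫ eqToHom (e G h').symm

theorem base_fac {h h' : G.adj.toComonad.Coalgebra} (f : h ⟶ h') :
    base G f ≫ G.ut.map (kh G h') = G.ut.map (kh G h ≫ G.D.map f.f) := by
  have uk : G.u.map f.f ≫ G.u.map h'.a = G.u.map h.a ≫ G.u.map (G.S.map (G.D.map f.f)) := by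
    erw [← G.u.map_comp, ← G.u.map_comp, hom_h]; rfl
  rw [G.ut.map_comp]
  simp only [kh_over, base, φ, Category.assoc, eqToHom_trans_assoc, eqToHom_refl,
    Category.id_comp]
  rw [meq' G (G.D.map f.f)]
  erw [reassoc_of% uk, eqToHom_trans_assoc, eqToHom_refl, Category.id_comp]
  erw [Category.assoc]
  rfl

noncomputable def Nmap {h h' : G.adj.toComonad.Coalgebra} (f : h ⟶ h') :
    Nobj G h ⟶ Nobj G h' :=
  cartLift G.ut (kh_cart G h') (kh G h ≫ G.D.map f.f) (base G f) (base_fac G f)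

theorem Nmap_over {h h' : G.adj.toComonad.Coalgebra} (f : h ⟶ h') :
    G.ut.map (Nmap G f) = base G f :=
  cartLift_over _ _ _ _ _

theorem Nmap_fac {h h' : G.adj.toComonad.Coalgebra} (f : h ⟶ h') :
    Nmap G f ≫ kh G h' = kh G h ≫ G.D.map f.f :=
  cartLift_fac _ _ _ _ _

noncomputable def N : G.adj.toComonad.Coalgebra ⥤ Ut where
  obj := Nobj G
  map := Nmap G
  map_id h := by
    refine cart_unique G.ut (kh_cart G h) ?_ ?_
    · rw [Nmap_over]; simp [base]
    · rw [Nmap_fac]; simp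
  map_comp f g := by
    refine cart_unique G.ut (kh_cart G _) ?_ ?_
    · rw [Nmap_over, G.ut.map_comp, Nmap_over, Nmap_over]; simp [base]
    · rw [Nmap_fac, Category.assoc, Nmap_fac, ← Category.assoc, Nmap_fac]
      simp


def eζ (a : Ut) : G.ut.obj (Nobj G ((Comonad.comparison G.adj).obj a)) = G.ut.obj a :=
  (e G ((Comonad.comparison G.adj).obj a)).trans (oeq G a)

theorem ζ_base_fac (a : Ut) :
    eqToHom (eζ G a) ≫ G.ut.map (G.adj.unit.app a) =
      G.ut.map (kh G ((Comonad.comparison G.adj).obj a)) := by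
  rw [kh_over]
  simp only [φ, Comonad.comparison_obj_a, Comonad.comparison_obj_A, eζ]
  erw [meq, Category.assoc, eqToHom_trans_assoc, Category.assoc, eqToHom_trans, eqToHom_refl,
    Category.comp_id]
  rfl

noncomputable def ζa (a : Ut) :
    Nobj G ((Comonad.comparison G.adj).obj a) ⟶ a :=
  cartLift G.ut (G.unit_cart a) (kh G ((Comonad.comparison G.adj).obj a))
    (eqToHom (eζ G a)) (ζ_base_fac G a)

theorem ζa_over (a : Ut) : G.ut.map (ζa G a) = eqToHom (eζ G a) :=
  cartLift_over _ _ _ _ _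

theorem ζa_fac (a : Ut) :
    ζa G a ≫ G.adj.unit.app a = kh G ((Comonad.comparison G.adj).obj a) :=
  cartLift_fac _ _ _ _ _

instance ζa_iso (a : Ut) : IsIso (ζa G a) := by
  refine cart_iso G.ut (cart_cancel G.ut (G.unit_cart a) ?_) ?_
  · rw [ζa_fac]; exact kh_cart G _
  · rw [ζa_over]; infer_instance

theorem ζ_nat {a b : Ut} (g : a ⟶ b) :
    Nmap G ((Comonad.comparison G.adj).map g) ≫ ζa G b = ζa G a ≫ g := by
  refine cart_unique G.ut (G.unit_cart b) ?_ ?_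
  · simp only [Functor.id_obj, Functor.comp_obj]
    rw [G.ut.map_comp, G.ut.map_comp, Nmap_over, ζa_over, ζa_over]
    simp only [base, Comonad.comparison_map_f, eζ]
    erw [Category.assoc, Category.assoc, eqToHom_trans, meq, Category.assoc, eqToHom_trans_assoc,
      Category.assoc, eqToHom_trans, eqToHom_refl, Category.comp_id]
  · simp only [Functor.id_obj, Functor.comp_obj]
    rw [Category.assoc, Category.assoc, ζa_fac]
    have nat : g ≫ G.adj.unit.app b = G.adj.unit.app a ≫ G.D.map (G.S.map g) := by
      simpa using (G.adj.unit.naturality g)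
    rw [nat, ← Category.assoc, ζa_fac]
    have := Nmap_fac G ((Comonad.comparison G.adj).map g)
    exact this

noncomputable def ξiso (h : G.adj.toComonad.Coalgebra) :
    (Comonad.comparison G.adj).obj (Nobj G h) ≅ h :=
  Comonad.Coalgebra.isoMk (@asIso _ _ _ _ (θ G h) (θ_iso G h))
    (by exact θ_coalg G h)

theorem ξ_nat {h h' : G.adj.toComonad.Coalgebra} (f : h ⟶ h') :
    G.S.map (Nmap G f) ≫ θ G h' = θ G h ≫ f.f := by
  rw [θ, ← Category.assoc, ← G.S.map_comp, Nmap_fac, G.S.map_comp, Category.assoc]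
  have nat := G.adj.counit.naturality f.f
  simp only [Functor.comp_map, Functor.id_map] at nat
  rw [nat, θ, Category.assoc]

theorem tri1 (a : Ut) : G.S.map (ζa G a) = θ G ((Comonad.comparison G.adj).obj a) := by
  erw [θ, ← ζa_fac G a, G.S.map_comp, Category.assoc]
  erw [G.adj.left_triangle_components, Category.comp_id]

theorem unit_Dθ (h : G.adj.toComonad.Coalgebra) :
    G.adj.unit.app (Nobj G h) ≫ G.D.map (θ G h) = kh G h := by
  rw [θ, G.D.map_comp, ← Category.assoc]
  have nat : G.adj.unit.app (Nobj G h) ≫ G.D.map (G.S.map (kh G h)) =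
      kh G h ≫ G.adj.unit.app (G.D.obj h.A) := by
    simpa using (G.adj.unit.naturality (kh G h)).symm
  rw [nat, Category.assoc, G.adj.right_triangle_components, Category.comp_id]

theorem tri2 (h : G.adj.toComonad.Coalgebra) :
    Nmap G ((ξiso G h).hom) = ζa G (Nobj G h) := by
  refine cart_unique G.ut (kh_cart G h) ?_ ?_
  · rw [Nmap_over, ζa_over]
    simp only [base, eζ, ξiso, Comonad.Coalgebra.isoMk_hom_f, asIso_hom]
    erw [θ_over]
    erw [eqToHom_trans, eqToHom_trans]
  · rw [Nmap_fac]
    have hf : ((ξiso G h).hom).f = θ G h := rfl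
    erw [hf, ← ζa_fac G (Nobj G h), Category.assoc, unit_Dθ]


noncomputable def ζnat : Comonad.comparison G.adj ⋙ N G ≅ 𝟭 Ut :=
  NatIso.ofComponents (fun a => @asIso _ _ _ _ (ζa G a) (ζa_iso G a)) (fun g => by exact ζ_nat G g)

noncomputable def ξnat : N G ⋙ Comonad.comparison G.adj ≅ 𝟭 G.adj.toComonad.Coalgebra :=
  NatIso.ofComponents (fun h => ξiso G h) (fun f => by
    ext
    exact ξ_nat G f)

end GCwFAux

/-- in a gcwf (the fibration `u̇` being cloven, which is automatic here since
`IsFibration` asserts the existence of cartesian lifts), the canonical comparison functor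
`M : U̇ ⥤ Coalg(ΣΔ)`, sending `a` to the coalgebra `Ση_a : Σa ⟶ ΣΔΣa`, is an equivalence:
there are a quasi-inverse `N` and natural isomorphisms `ζ : NM ≅ Id` and `ξ : MN ≅ Id` forming
an adjoint equivalence, all of whose components are vertical (lie over identities in `B`). -/
theorem gcwf_comparison_equivalence
    {B U Ut : Type*} [Category B] [Category U] [Category Ut] (G : GCwF B U Ut) :
    ∃ (N : G.adj.toComonad.Coalgebra ⥤ Ut)
      (ζ : Comonad.comparison G.adj ⋙ N ≅ 𝟭 Ut)
      (ξ : N ⋙ Comonad.comparison G.adj ≅ 𝟭 G.adj.toComonad.Coalgebra),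
      (∀ a : Ut, (Comonad.comparison G.adj).map (ζ.hom.app a) =
          ξ.hom.app ((Comonad.comparison G.adj).obj a)) ∧
      (∀ h : G.adj.toComonad.Coalgebra, N.map (ξ.hom.app h) = ζ.hom.app (N.obj h)) ∧
      (∀ a : Ut, ∃ e : G.ut.obj (N.obj ((Comonad.comparison G.adj).obj a)) = G.ut.obj a,
          G.ut.map (ζ.hom.app a) = eqToHom e) ∧
      (∀ h : G.adj.toComonad.Coalgebra,
          ∃ e : (G.adj.toComonad.forget ⋙ G.u).obj
                  ((Comonad.comparison G.adj).obj (N.obj h)) =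
                (G.adj.toComonad.forget ⋙ G.u).obj h,
          (G.adj.toComonad.forget ⋙ G.u).map (ξ.hom.app h) = eqToHom e) := by
  refine ⟨GCwFAux.N G, GCwFAux.ζnat G, GCwFAux.ξnat G, ?_, ?_, ?_, ?_⟩
  · intro a
    ext
    exact GCwFAux.tri1 G a
  · intro h
    exact GCwFAux.tri2 G h
  · intro a
    exact ⟨GCwFAux.eζ G a, GCwFAux.ζa_over G a⟩
  · intro h
    exact ⟨(GCwFAux.oeq G (GCwFAux.Nobj G h)).trans (GCwFAux.e G h), GCwFAux.θ_over G h⟩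
end
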